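/- Fix x with 0 < x < P := P_SD + (1−P_SD)·P_SR, P_SD, P_SR, P_RD ∈ (0,1). The unconstrained maximizer over q_R ∈ [0,1) of y(q_R) = q_R·P_RD − ((1−P_SD)·P_SR/P)·x − (q_R·P_RD/((1−q_R)·P))·x is q_R* = 1 − √(x/P), and the maximum value is y* = P_RD − 2·P_RD·√(x/P) + (x/P)·(P_RD − (1−P_SD)·P_SR). -/

import Mathlib

/-- The unconstrained maximizer over `q_R ∈ [0,1)` of the relay throughput
objective of problem [P2] is `q_R* = 1 - √(x/P)`, with the stated maximum
value. -/
theorem P2_maximizer (P_SD P_SR P_RD x : ℝ)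
    (hSD : P_SD ∈ Set.Ioo (0:ℝ) 1) (hSR : P_SR ∈ Set.Ioo (0:ℝ) 1)
    (hRD : P_RD ∈ Set.Ioo (0:ℝ) 1)
    (P : ℝ) (hP : P = P_SD + (1 - P_SD) * P_SR)
    (hx0 : 0 < x) (hx1 : x < P) :
    IsMaxOn
      (fun q_R => q_R * P_RD - ((1 - P_SD) * P_SR / P) * x
        - (q_R * P_RD / ((1 - q_R) * P)) * x)
      (Set.Ico (0:ℝ) 1) (1 - Real.sqrt (x / P)) ∧
    (fun q_R => q_R * P_RD - ((1 - P_SD) * P_SR / P) * x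
        - (q_R * P_RD / ((1 - q_R) * P)) * x) (1 - Real.sqrt (x / P))
      = P_RD - 2 * P_RD * Real.sqrt (x / P)
        + (x / P) * (P_RD - (1 - P_SD) * P_SR) := by
  obtain ⟨hSD0, hSD1⟩ := hSD
  obtain ⟨hSR0, hSR1⟩ := hSR
  obtain ⟨hRD0, hRD1⟩ := hRD
  have hP0 : 0 < P := lt_trans hx0 hx1
  set s := Real.sqrt (x / P) with hs
  have hrpos : 0 < x / P := div_pos hx0 hP0
  have hs0 : 0 < s := Real.sqrt_pos.mpr hrpos
  have hs2 : s ^ 2 = x / P := Real.sq_sqrt hrpos.le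
  have hxs : x = s ^ 2 * P := by field_simp at hs2; linarith [hs2]
  have hs1 : s < 1 := by
    have : x / P < 1 := (div_lt_one hP0).mpr hx1
    nlinarith [hs2, hs0]
  constructor
  · intro q hq
    obtain ⟨hq0, hq1⟩ := hq
    have hq1' : (0:ℝ) < 1 - q := by linarith
    simp only [Set.mem_setOf_eq]
    have key : ((1 - s) * P_RD - (1 - P_SD) * P_SR / P * x
          - (1 - s) * P_RD / ((1 - (1 - s)) * P) * x)
        - (q * P_RD - (1 - P_SD) * P_SR / P * x
          - q * P_RD / ((1 - q) * P) * x)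
        = P_RD * (1 - s - q) ^ 2 / (1 - q) := by
      rw [hxs, show (1:ℝ) - (1 - s) = s by ring]
      field_simp
      ring
    have hnn : 0 ≤ P_RD * (1 - s - q) ^ 2 / (1 - q) :=
      div_nonneg (mul_nonneg hRD0.le (sq_nonneg _)) hq1'.le
    linarith [key, hnn]
  · have key : (1 - s) * P_RD - (1 - P_SD) * P_SR / P * x
        - (1 - s) * P_RD / ((1 - (1 - s)) * P) * x
        = P_RD - 2 * P_RD * s + x / P * (P_RD - (1 - P_SD) * P_SR) := by
      rw [hxs, show (1:ℝ) - (1 - s) = s by ring]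
      field_simp
      ring
    simpa using key
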